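/- A function f : (0,∞) → ℝ is subentropic (i.e., subentropic of every order k) if and only if it is subentropic of order two. -/

import Mathlib

open scoped Matrix
open Matrix
open scoped ComplexOrder

noncomputable section

/-- The trace of `f` applied (by the functional calculus) to a Hermitian matrix,
computed via the eigenvalues.  Junk value `0` on non-Hermitian matrices. -/
def trFn (f : ℝ → ℝ) {d : Type} [Fintype d] [DecidableEq d] (ρ : Matrix d d ℂ) : ℝ :=
  if hρ : ρ.IsHermitian then ∑ i, f (hρ.eigenvalues i) else 0

/-- `f` applied to a Hermitian matrix by the functional calculus (spectral theorem).
Junk value `0` on non-Hermitian matrices. -/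
def matFn (f : ℝ → ℝ) {d : Type} [Fintype d] [DecidableEq d] (ρ : Matrix d d ℂ) :
    Matrix d d ℂ :=
  if hρ : ρ.IsHermitian then
    (hρ.eigenvectorUnitary : Matrix d d ℂ) *
      Matrix.diagonal (fun i => (f (hρ.eigenvalues i) : ℂ)) *
      star (hρ.eigenvectorUnitary : Matrix d d ℂ)
  else 0

/-- The partial trace over the second factor of a bipartite system `H₁ ⊗ H₂`,
where operators on `H₁ ⊗ H₂` are modelled as matrices indexed by `Fin m × Fin n`. -/
def partialTrace {m n : ℕ} (ρ : Matrix (Fin m × Fin n) (Fin m × Fin n) ℂ) :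
    Matrix (Fin m) (Fin m) ℂ :=
  Matrix.of fun i j => ∑ k : Fin n, ρ (i, k) (j, k)

/-- A convex function `f : (0,∞) → ℝ` is entropic if on every finite-dimensional
bipartite system the map `ρ ↦ -Tr f(ρ₁) + Tr f(ρ)` is convex in positive definite `ρ`,
where `ρ₁` is the partial trace of `ρ` on the first factor. -/
def IsEntropic (f : ℝ → ℝ) : Prop :=
  ConvexOn ℝ (Set.Ioi (0 : ℝ)) f ∧
  ∀ m n : ℕ,
    ConvexOn ℝ {ρ : Matrix (Fin m × Fin n) (Fin m × Fin n) ℂ | ρ.PosDef}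
      (fun ρ => - trFn f (partialTrace ρ) + trFn f ρ)

/-- A convex function `f : (0,∞) → ℝ` is subentropic of order `k` if
`G(ρ₁,…,ρ_k) = -Tr f(ρ₁+⋯+ρ_k) + Tr f(ρ₁) + ⋯ + Tr f(ρ_k)` is convex in `k`-tuples of
positive definite operators on any finite-dimensional Hilbert space. -/
def SubentropicOfOrder (f : ℝ → ℝ) (k : ℕ) : Prop :=
  ConvexOn ℝ (Set.Ioi (0 : ℝ)) f ∧
  ∀ n : ℕ,
    ConvexOn ℝ {ρ : Fin k → Matrix (Fin n) (Fin n) ℂ | ∀ i, (ρ i).PosDef}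
      (fun ρ => - trFn f (∑ i, ρ i) + ∑ i, trFn f (ρ i))

/-- A function is subentropic if it is subentropic of all orders. -/
def Subentropic (f : ℝ → ℝ) : Prop :=
  ∀ k : ℕ, SubentropicOfOrder f k

/-- Divided difference of `g`, with `g'` on the diagonal. -/
def divDiff (g : ℝ → ℝ) (x y : ℝ) : ℝ :=
  if x = y then deriv g x else (g x - g y) / (x - y)

/-- Conjugation `h ↦ U * h * U*` as a linear operator on matrices. -/
def conjEnd {n : ℕ} (U : Matrix (Fin n) (Fin n) ℂ) :
    Module.End ℂ (Matrix (Fin n) (Fin n) ℂ) :=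
  (LinearMap.mulLeft ℂ U).comp (LinearMap.mulRight ℂ (star U))

/-- Hadamard (entrywise) multiplication by a fixed matrix `L`, as a linear operator. -/
def hadamardEnd {n : ℕ} (L : Matrix (Fin n) (Fin n) ℂ) :
    Module.End ℂ (Matrix (Fin n) (Fin n) ℂ) where
  toFun h := L ⊙ h
  map_add' h₁ h₂ := Matrix.hadamard_add L h₁ h₂
  map_smul' c h := Matrix.hadamard_smul L h c

/-- The Fréchet differential `dg(ρ)` of the matrix function induced by `g` at the
Hermitian matrix `ρ`: in a basis diagonalising `ρ` it acts as the Hadamard product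
with the Löwner matrix of divided differences of `g`.  Junk value `0` at
non-Hermitian matrices. -/
def frechetDiff (g : ℝ → ℝ) {n : ℕ} (ρ : Matrix (Fin n) (Fin n) ℂ) :
    Module.End ℂ (Matrix (Fin n) (Fin n) ℂ) :=
  if hρ : ρ.IsHermitian then
    (conjEnd (hρ.eigenvectorUnitary : Matrix (Fin n) (Fin n) ℂ)).comp
      ((hadamardEnd (Matrix.of fun i j =>
          (divDiff g (hρ.eigenvalues i) (hρ.eigenvalues j) : ℂ))).comp
        (conjEnd (star (hρ.eigenvectorUnitary : Matrix (Fin n) (Fin n) ℂ))))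
  else 0

/-- The order, with respect to the trace inner product, between operators on `B(H)`:
`T ≤ S` iff `S - T` is a positive superoperator. -/
def endLE {n : ℕ} (T S : Module.End ℂ (Matrix (Fin n) (Fin n) ℂ)) : Prop :=
  ∀ h : Matrix (Fin n) (Fin n) ℂ, 0 ≤ Matrix.trace (star h * (S h - T h))

/-- The harmonic mean `H₂(A,B) = 2 (A⁻¹ + B⁻¹)⁻¹` of two (positive definite, hence
invertible) operators on `B(H)`. -/
def harmonicMeanEnd {n : ℕ} (A B : Module.End ℂ (Matrix (Fin n) (Fin n) ℂ)) :
    Module.End ℂ (Matrix (Fin n) (Fin n) ℂ) :=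
  (2 : ℂ) • Ring.inverse (Ring.inverse A + Ring.inverse B)

/-- The amplification `id_n ⊗ Φ` of a linear map on matrices. -/
def amplify {m k : ℕ} (Φ : Matrix (Fin m) (Fin m) ℂ →ₗ[ℂ] Matrix (Fin k) (Fin k) ℂ)
    (n : ℕ) (A : Matrix (Fin n × Fin m) (Fin n × Fin m) ℂ) :
    Matrix (Fin n × Fin k) (Fin n × Fin k) ℂ :=
  Matrix.of fun p q => Φ (Matrix.of fun x y => A (p.1, x) (q.1, y)) p.2 q.2

/-- A linear map on matrices is completely positive if all its amplifications
preserve positive semidefiniteness. -/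
def IsCompletelyPositive {m k : ℕ}
    (Φ : Matrix (Fin m) (Fin m) ℂ →ₗ[ℂ] Matrix (Fin k) (Fin k) ℂ) : Prop :=
  ∀ n : ℕ, ∀ A : Matrix (Fin n × Fin m) (Fin n × Fin m) ℂ,
    A.PosSemidef → (amplify Φ n A).PosSemidef

/-- A quantum channel is a completely positive trace preserving linear map. -/
def IsQuantumChannel {m k : ℕ}
    (Φ : Matrix (Fin m) (Fin m) ℂ →ₗ[ℂ] Matrix (Fin k) (Fin k) ℂ) : Prop :=
  IsCompletelyPositive Φ ∧ ∀ A, (Φ A).trace = A.trace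

lemma myPosDef_smul {n : ℕ} {A : Matrix (Fin n) (Fin n) ℂ} (hA : A.PosDef) {a : ℝ}
    (ha : 0 < a) : (a • A).PosDef := by
  refine ⟨?_, fun x hx => ?_⟩
  · unfold Matrix.IsHermitian
    rw [Matrix.conjTranspose_smul, hA.1.eq]; simp
  · exact (hA.smul ha).2 hx

lemma myConvex_posDef {k n : ℕ} :
    Convex ℝ {ρ : Fin k → Matrix (Fin n) (Fin n) ℂ | ∀ i, (ρ i).PosDef} := by
  intro x hx y hy a b ha hb hab i
  simp only [Pi.add_apply, Pi.smul_apply]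
  rcases eq_or_lt_of_le ha with h | h
  · have hb1 : b = 1 := by linarith
    rw [← h, hb1, zero_smul, one_smul, zero_add]; exact hy i
  rcases eq_or_lt_of_le hb with h' | h'
  · have ha1 : a = 1 := by linarith
    rw [← h', ha1, zero_smul, one_smul, add_zero]; exact hx i
  exact (myPosDef_smul (hx i) h).add (myPosDef_smul (hy i) h')

lemma myPosDef_sum {k n : ℕ} {ρ : Fin (k + 1) → Matrix (Fin n) (Fin n) ℂ}
    (h : ∀ i, (ρ i).PosDef) : (∑ i, ρ i).PosDef := by
  rw [Fin.sum_univ_castSucc]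
  refine Matrix.PosDef.posSemidef_add ?_ (h _)
  exact Finset.sum_induction _ _ (fun a b ha hb => ha.add hb) Matrix.PosSemidef.zero
    (fun i _ => (h _).posSemidef)

lemma mySub_zero {f : ℝ → ℝ} (hf : ConvexOn ℝ (Set.Ioi (0 : ℝ)) f) :
    SubentropicOfOrder f 0 := by
  refine ⟨hf, fun n => ?_⟩
  have h : (fun ρ : Fin 0 → Matrix (Fin n) (Fin n) ℂ =>
      - trFn f (∑ i, ρ i) + ∑ i, trFn f (ρ i)) = fun _ => - trFn f (0 : Matrix (Fin n) (Fin n) ℂ) := by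
    funext ρ; simp
  rw [h]
  exact convexOn_const _ myConvex_posDef

lemma mySub_one {f : ℝ → ℝ} (hf : ConvexOn ℝ (Set.Ioi (0 : ℝ)) f) :
    SubentropicOfOrder f 1 := by
  refine ⟨hf, fun n => ?_⟩
  have h : (fun ρ : Fin 1 → Matrix (Fin n) (Fin n) ℂ =>
      - trFn f (∑ i, ρ i) + ∑ i, trFn f (ρ i)) = fun _ => 0 := by
    funext ρ; simp
  rw [h]
  exact convexOn_const _ myConvex_posDef

lemma mySub_step {f : ℝ → ℝ} {k : ℕ} (h2 : SubentropicOfOrder f 2)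
    (hk : SubentropicOfOrder f (k + 1)) : SubentropicOfOrder f (k + 2) := by
  refine ⟨h2.1, fun n => ?_⟩
  refine ⟨myConvex_posDef, ?_⟩
  intro x hx y hy a b ha hb hab
  set L : (Fin (k + 2) → Matrix (Fin n) (Fin n) ℂ) → (Fin 2 → Matrix (Fin n) (Fin n) ℂ) :=
    fun z => ![∑ i : Fin (k + 1), z i.castSucc, z (Fin.last (k + 1))] with hL
  have key : ∀ z : Fin (k + 2) → Matrix (Fin n) (Fin n) ℂ,
      - trFn f (∑ i, z i) + ∑ i, trFn f (z i)
      = (- trFn f (∑ i, L z i) + ∑ i, trFn f (L z i))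
        + (- trFn f (∑ i : Fin (k + 1), z i.castSucc)
           + ∑ i : Fin (k + 1), trFn f (z i.castSucc)) := by
    intro z
    have e1 : ∑ i, L z i = (∑ i : Fin (k + 1), z i.castSucc) + z (Fin.last (k + 1)) := by
      simp [hL, Fin.sum_univ_two]
    have e2 : ∑ i, trFn f (L z i)
        = trFn f (∑ i : Fin (k + 1), z i.castSucc) + trFn f (z (Fin.last (k + 1))) := by
      simp [hL, Fin.sum_univ_two]
    rw [e1, e2, Fin.sum_univ_castSucc (f := z),
      Fin.sum_univ_castSucc (f := fun i => trFn f (z i))]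
    ring
  have hLmem : ∀ z : Fin (k + 2) → Matrix (Fin n) (Fin n) ℂ, (∀ i, (z i).PosDef) →
      ∀ i, ((L z) i).PosDef := by
    intro z hz i
    fin_cases i
    · simpa [hL] using myPosDef_sum (fun j => hz j.castSucc)
    · simpa [hL] using hz (Fin.last (k + 1))
  have hLlin : L (a • x + b • y) = a • L x + b • L y := by
    funext i
    fin_cases i
    · simp [hL, Finset.smul_sum, Finset.sum_add_distrib]
    · simp [hL]
  have I2 := (h2.2 n).2 (hLmem x hx) (hLmem y hy) ha hb hab
  have Ik := (hk.2 n).2 (x := fun i => x i.castSucc) (y := fun i => y i.castSucc)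
    (fun i => hx i.castSucc) (fun i => hy i.castSucc) ha hb hab
  simp only [smul_eq_mul, Pi.add_apply, Pi.smul_apply] at I2 Ik
  dsimp only
  rw [key (a • x + b • y), key x, key y, hLlin]
  simp only [Pi.add_apply, Pi.smul_apply, smul_eq_mul] at I2 Ik ⊢
  ring_nf at I2 Ik ⊢
  linarith [I2, Ik]

/-- A function is subentropic (of every order) iff it is subentropic of
order two. -/
theorem subentropic_iff_subentropic_order_two (f : ℝ → ℝ) :
    Subentropic f ↔ SubentropicOfOrder f 2 := by
  constructor
  · exact fun h => h 2
  · intro h2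
    have main : ∀ k, SubentropicOfOrder f (k + 1) := by
      intro k
      induction k with
      | zero => exact mySub_one h2.1
      | succ m ih => exact mySub_step h2 ih
    intro k
    cases k with
    | zero => exact mySub_zero h2.1
    | succ m => exact main m

end
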